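/- arXiv:2309.02635 — 7 statements merged into one kernel-verified Lean document; each statement's English description precedes it below -/
import Mathlib

section
/- Let g be a finite simple graph, k a natural number, and S ⊆ V(g) a set of vertices. Suppose u ∈ V(g)\S satisfies |Ē(S ∪ {u})| ≤ k and d_g(u) ≥ |V(g)| − 2. Then for every k-defective clique C of g with S ⊆ C ⊆ V(g) there exists a k-defective clique C′ of g with S ∪ {u} ⊆ C′ ⊆ V(g) and |C′| ≥ |C|. In particular, some maximum k-defective clique of g containing S also contains u (correctness of reduction rule RR2). -/
open Finset

variable {V : Type*} [Fintype V] [DecidableEq V]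

/-- The set of non-edges of `S`: unordered pairs of distinct vertices of `S`
that are not adjacent in `G`. -/
def nonEdges (G : SimpleGraph V) [DecidableRel G.Adj] (S : Finset V) : Finset (Sym2 V) :=
  ((S ×ˢ S).filter fun p => p.1 ≠ p.2 ∧ ¬ G.Adj p.1 p.2).image fun p => s(p.1, p.2)

set_option linter.unusedSectionVars false

lemma mem_nonEdges {G : SimpleGraph V} [DecidableRel G.Adj] {S : Finset V} {x y : V} :
    s(x,y) ∈ nonEdges G S ↔ x ∈ S ∧ y ∈ S ∧ x ≠ y ∧ ¬ G.Adj x y := by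
  unfold nonEdges
  simp only [mem_image, mem_filter, mem_product, Sym2.eq, Sym2.rel_iff', Prod.mk.injEq,
    Prod.swap_prod_mk]
  constructor
  · rintro ⟨⟨a,b⟩, ⟨⟨ha,hb⟩, hne, hadj⟩, h⟩
    rcases h with ⟨rfl, rfl⟩ | ⟨rfl, rfl⟩
    · exact ⟨ha, hb, hne, hadj⟩
    · exact ⟨hb, ha, fun h => hne h.symm, fun h => hadj h.symm⟩
  · rintro ⟨hx, hy, hne, hadj⟩
    exact ⟨(x,y), ⟨⟨hx,hy⟩, hne, hadj⟩, Or.inl ⟨rfl, rfl⟩⟩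

lemma nonEdges_decomp {G : SimpleGraph V} [DecidableRel G.Adj] {S : Finset V} {e : Sym2 V}
    (he : e ∈ nonEdges G S) :
    ∃ a b, e = s(a,b) ∧ a ∈ S ∧ b ∈ S ∧ a ≠ b ∧ ¬ G.Adj a b := by
  induction e using Sym2.ind with
  | _ a b => exact ⟨a, b, rfl, mem_nonEdges.mp he⟩

lemma uniq_nonnbr {G : SimpleGraph V} [DecidableRel G.Adj] {u : V}
    (h2 : Fintype.card V - 2 ≤ G.degree u) {x y : V}
    (hx : x ≠ u) (hax : ¬ G.Adj u x) (hy : y ≠ u) (hay : ¬ G.Adj u y) : x = y := by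
  by_contra hxy
  have hsub : G.neighborFinset u ⊆ univ \ {u, x, y} := by
    intro z hz
    simp only [mem_sdiff, mem_univ, mem_insert, mem_singleton, true_and]
    rw [SimpleGraph.mem_neighborFinset] at hz
    push_neg
    refine ⟨fun h => G.irrefl (h ▸ hz), fun h => hax (h ▸ hz), fun h => hay (h ▸ hz)⟩
  have hcard3 : ({u, x, y} : Finset V).card = 3 := by
    rw [card_insert_of_notMem, card_insert_of_notMem, card_singleton]
    · simp [hxy]
    · simp only [mem_insert, mem_singleton]
      push_neg
      exact ⟨Ne.symm hx, Ne.symm hy⟩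
  have h3 : 3 ≤ Fintype.card V := by
    calc 3 = ({u, x, y} : Finset V).card := hcard3.symm
    _ ≤ Fintype.card V := card_le_card (subset_univ _)
  have := card_le_card hsub
  rw [card_sdiff_of_subset (subset_univ _), card_univ, hcard3] at this
  rw [← SimpleGraph.card_neighborFinset_eq_degree] at h2
  omega

/-- Correctness of reduction rule RR2: if `u ∉ S` satisfies `|Ē(S ∪ {u})| ≤ k` and
`d_g(u) ≥ |V(g)| − 2`, then every `k`-defective clique `C ⊇ S` can be replaced by a
`k`-defective clique `C' ⊇ S ∪ {u}` that is at least as large. -/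
theorem rr2_correct (G : SimpleGraph V) [DecidableRel G.Adj] (k : ℕ)
    (S : Finset V) (u : V) (hu : u ∉ S)
    (h1 : (nonEdges G (insert u S)).card ≤ k)
    (h2 : Fintype.card V - 2 ≤ G.degree u) :
    ∀ C : Finset V, S ⊆ C → (nonEdges G C).card ≤ k →
      ∃ C' : Finset V, insert u S ⊆ C' ∧ (nonEdges G C').card ≤ k ∧ C.card ≤ C'.card := by
  intro C hSC hC
  by_cases huC : u ∈ C
  · exact ⟨C, insert_subset huC hSC, hC, le_refl _⟩
  by_cases hall : ∀ x ∈ C, G.Adj u x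
  · -- u adjacent to everything in C
    refine ⟨insert u C, insert_subset_insert _ hSC, ?_, ?_⟩
    · refine le_trans (card_le_card ?_) hC
      intro e he
      obtain ⟨a, b, rfl, ha, hb, hne, hadj⟩ := nonEdges_decomp he
      rw [mem_insert] at ha hb
      rcases ha with rfl | ha
      · rcases hb with rfl | hb
        · exact absurd rfl hne
        · exact absurd (hall b hb) hadj
      · rcases hb with rfl | hb
        · exact absurd (hall a ha) (fun h => hadj h.symm)
        · exact mem_nonEdges.mpr ⟨ha, hb, hne, hadj⟩
    · rw [card_insert_of_notMem huC]; omega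
  · push_neg at hall
    obtain ⟨w, hwC, hwadj⟩ := hall
    have hwu : w ≠ u := fun h => huC (h ▸ hwC)
    have huniq : ∀ x, x ≠ u → ¬ G.Adj u x → x = w :=
      fun x hx hax => uniq_nonnbr h2 hx hax hwu hwadj
    by_cases hwS : w ∈ S
    · have hsuw : s(u, w) ∈ nonEdges G (insert u S) :=
        mem_nonEdges.mpr ⟨mem_insert_self _ _, mem_insert_of_mem hwS,
          fun h => hwu h.symm, hwadj⟩
      by_cases hP : ∀ e ∈ nonEdges G C, ∀ x ∈ e, x ∈ S
      · -- all non-edges of C inside S: counting argument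
        refine ⟨insert u C, insert_subset_insert _ hSC, ?_, ?_⟩
        · have hsub1 : nonEdges G C ⊆ (nonEdges G (insert u S)).erase s(u, w) := by
            intro e he
            obtain ⟨a, b, rfl, ha, hb, hne, hadj⟩ := nonEdges_decomp he
            have haS : a ∈ S := hP _ he a (Sym2.mem_mk_left a b)
            have hbS : b ∈ S := hP _ he b (Sym2.mem_mk_right a b)
            refine mem_erase.mpr ⟨?_, mem_nonEdges.mpr
              ⟨mem_insert_of_mem haS, mem_insert_of_mem hbS, hne, hadj⟩⟩
            intro h
            rw [Sym2.eq, Sym2.rel_iff', Prod.mk.injEq, Prod.swap_prod_mk, Prod.mk.injEq] at h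
            rcases h with ⟨rfl, rfl⟩ | ⟨rfl, rfl⟩
            · exact hu haS
            · exact hu hbS
          have hle : (nonEdges G C).card + 1 ≤ k := by
            have := card_le_card hsub1
            rw [card_erase_of_mem hsuw] at this
            have hpos : 1 ≤ (nonEdges G (insert u S)).card := card_pos.mpr ⟨_, hsuw⟩
            omega
          have hsub2 : nonEdges G (insert u C) ⊆ insert s(u, w) (nonEdges G C) := by
            intro e he
            obtain ⟨a, b, rfl, ha, hb, hne, hadj⟩ := nonEdges_decomp he
            rw [mem_insert] at ha hb
            rcases ha with rfl | ha
            · rcases hb with rfl | hb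
              · exact absurd rfl hne
              · have : b = w := huniq b (fun h => hne h.symm) hadj
                subst this; exact mem_insert_self _ _
            · rcases hb with rfl | hb
              · have : a = w := huniq a hne (fun h => hadj h.symm)
                subst this
                exact mem_insert.mpr (Or.inl (Sym2.eq_swap))
              · exact mem_insert_of_mem (mem_nonEdges.mpr ⟨ha, hb, hne, hadj⟩)
          calc (nonEdges G (insert u C)).card
              ≤ (insert s(u,w) (nonEdges G C)).card := card_le_card hsub2
            _ ≤ (nonEdges G C).card + 1 := card_insert_le _ _
            _ ≤ k := hle
        · rw [card_insert_of_notMem huC]; omega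
      · -- there is a non-edge of C with an endpoint outside S: swap it for u
        push_neg at hP
        obtain ⟨e₀, he₀, v, hve₀, hvS⟩ := hP
        have hvC : v ∈ C := by
          obtain ⟨a, b, rfl, ha, hb, _, _⟩ := nonEdges_decomp he₀
          rcases Sym2.mem_iff.mp hve₀ with rfl | rfl
          · exact ha
          · exact hb
        have hvu : v ≠ u := fun h => huC (h ▸ hvC)
        have hvw : v ≠ w := fun h => hvS (h ▸ hwS)
        refine ⟨insert u (C.erase v), ?_, ?_, ?_⟩
        · apply insert_subset_insert
          intro x hx
          exact mem_erase.mpr ⟨fun h => hvS (h ▸ hx), hSC hx⟩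
        · have hsub : nonEdges G (insert u (C.erase v)) ⊆
              insert s(u, w) ((nonEdges G C).erase e₀) := by
            intro e he
            obtain ⟨a, b, rfl, ha, hb, hne, hadj⟩ := nonEdges_decomp he
            rw [mem_insert] at ha hb
            rcases ha with rfl | ha
            · rcases hb with rfl | hb
              · exact absurd rfl hne
              · have : b = w := huniq b (fun h => hne h.symm) hadj
                subst this; exact mem_insert_self _ _
            · rcases hb with rfl | hb
              · have : a = w := huniq a hne (fun h => hadj h.symm)
                subst this
                exact mem_insert.mpr (Or.inl Sym2.eq_swap)
              · rw [mem_erase] at ha hb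
                refine mem_insert_of_mem (mem_erase.mpr ⟨?_,
                  mem_nonEdges.mpr ⟨ha.2, hb.2, hne, hadj⟩⟩)
                intro h
                subst h
                rcases Sym2.mem_iff.mp hve₀ with rfl | rfl
                · exact ha.1 rfl
                · exact hb.1 rfl
          have hpos : 1 ≤ (nonEdges G C).card := card_pos.mpr ⟨_, he₀⟩
          calc (nonEdges G (insert u (C.erase v))).card
              ≤ (insert s(u,w) ((nonEdges G C).erase e₀)).card := card_le_card hsub
            _ ≤ ((nonEdges G C).erase e₀).card + 1 := card_insert_le _ _
            _ = (nonEdges G C).card - 1 + 1 := by rw [card_erase_of_mem he₀]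
            _ ≤ k := by omega
        · have huE : u ∉ C.erase v := fun h => huC (mem_of_mem_erase h)
          rw [card_insert_of_notMem huE, card_erase_of_mem hvC]
          have : 1 ≤ C.card := card_pos.mpr ⟨_, hvC⟩
          omega
    · -- w ∉ S : swap w for u
      refine ⟨insert u (C.erase w), ?_, ?_, ?_⟩
      · apply insert_subset_insert
        intro x hx
        exact mem_erase.mpr ⟨fun h => hwS (h ▸ hx), hSC hx⟩
      · refine le_trans (card_le_card ?_) hC
        intro e he
        obtain ⟨a, b, rfl, ha, hb, hne, hadj⟩ := nonEdges_decomp he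
        rw [mem_insert] at ha hb
        rcases ha with rfl | ha
        · rcases hb with rfl | hb
          · exact absurd rfl hne
          · have : b = w := huniq b (fun h => hne h.symm) hadj
            exact absurd this (mem_erase.mp hb).1
        · rcases hb with rfl | hb
          · have : a = w := huniq a hne (fun h => hadj h.symm)
            exact absurd this (mem_erase.mp ha).1
          · exact mem_nonEdges.mpr ⟨mem_of_mem_erase ha, mem_of_mem_erase hb, hne, hadj⟩
      · have huE : u ∉ C.erase w := fun h => huC (mem_of_mem_erase h)
        rw [card_insert_of_notMem huE, card_erase_of_mem hwC]
        have : 1 ≤ C.card := card_pos.mpr ⟨_, hwC⟩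
        omega
end

section
/- Let G be a finite simple graph, k a natural number, and C a k-defective clique of G. If u, v ∈ C are adjacent in G, then |C| ≤ |N_G(u) ∩ N_G(v)| + 2 + k, where N_G(u) ∩ N_G(v) is the set of common neighbors of u and v in G (correctness of the edge reduction rule RR6: an edge whose endpoints have fewer than lb − k − 1 common neighbors lies in no k-defective clique of size greater than lb). -/
open Finset

variable {V : Type*} [Fintype V] [DecidableEq V]

omit [Fintype V] in
lemma mem_nonEdges_of (G : SimpleGraph V) [DecidableRel G.Adj] {S : Finset V} {x y : V}
    (hx : x ∈ S) (hy : y ∈ S) (hxy : x ≠ y) (h : ¬ G.Adj x y) :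
    s(x, y) ∈ nonEdges G S := by
  simp only [nonEdges, mem_image, mem_filter, mem_product]
  exact ⟨(x, y), ⟨⟨hx, hy⟩, hxy, h⟩, rfl⟩

/-- Correctness of the edge reduction rule RR6: if `C` is a `k`-defective clique of `G`
and `u, v ∈ C` are adjacent, then `|C| ≤ |N_G(u) ∩ N_G(v)| + 2 + k`. -/
theorem rr6_correct (G : SimpleGraph V) [DecidableRel G.Adj] (k : ℕ)
    (C : Finset V) (hC : (nonEdges G C).card ≤ k)
    (u v : V) (hu : u ∈ C) (hv : v ∈ C) (huv : G.Adj u v) :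
    C.card ≤ (G.neighborFinset u ∩ G.neighborFinset v).card + 2 + k := by
  classical
  set B := C.filter (fun w => w ≠ u ∧ w ≠ v ∧ G.Adj u w ∧ G.Adj v w) with hB
  set D := C.filter (fun w => w ≠ u ∧ w ≠ v ∧ ¬(G.Adj u w ∧ G.Adj v w)) with hD
  have hsub : C ⊆ insert u (insert v (B ∪ D)) := by
    intro w hw
    by_cases h1 : w = u; · simp [h1]
    by_cases h2 : w = v; · simp [h2]
    simp only [mem_insert, mem_union, hB, hD, mem_filter]
    by_cases h3 : G.Adj u w ∧ G.Adj v w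
    · exact Or.inr (Or.inr (Or.inl ⟨hw, h1, h2, h3⟩))
    · exact Or.inr (Or.inr (Or.inr ⟨hw, h1, h2, h3⟩))
  have hBcard : B.card ≤ (G.neighborFinset u ∩ G.neighborFinset v).card := by
    apply card_le_card
    intro w hw
    simp only [hB, mem_filter] at hw
    simp [SimpleGraph.mem_neighborFinset, hw.2.2.2.1, hw.2.2.2.2]
  have hDcard : D.card ≤ (nonEdges G C).card := by
    apply card_le_card_of_injOn (fun w => if G.Adj u w then s(v, w) else s(u, w))
    · intro w hw
      simp only [hD, mem_coe, mem_filter] at hw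
      obtain ⟨hwC, hwu, hwv, hna⟩ := hw
      by_cases h : G.Adj u w
      · have hnv : ¬ G.Adj v w := fun hv' => hna ⟨h, hv'⟩
        simp only [h, if_true]
        exact mem_nonEdges_of G hv hwC (Ne.symm hwv) hnv
      · simp only [h, if_false]
        exact mem_nonEdges_of G hu hwC (Ne.symm hwu) h
    · intro w hw w' hw' heq
      simp only [hD, mem_coe, mem_filter] at hw hw'
      by_cases h : G.Adj u w <;> by_cases h' : G.Adj u w' <;>
        simp only [h, h', if_true, if_false, Sym2.eq, Sym2.rel_iff', Prod.mk.injEq,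
          Prod.swap_prod_mk] at heq <;> tauto
  calc C.card ≤ (insert u (insert v (B ∪ D))).card := card_le_card hsub
    _ ≤ (B ∪ D).card + 2 := by
        have h1 := card_insert_le v (B ∪ D)
        have h2 := card_insert_le u (insert v (B ∪ D))
        omega
    _ ≤ B.card + D.card + 2 := by have := card_union_le B D; omega
    _ ≤ _ := by omega
end

section
/- Let g be a finite simple graph, k a natural number, S ⊆ V(g), and let v_1, v_2, …, v_t be an enumeration of V(g)\S in non-decreasing order of |N̄_S(·)|. Let lb be an integer with lb ≥ |S|. Suppose the index i satisfies i > lb − |S| and |N̄_S(v_i)| > k − |Ē(S)| − ∑_{j=1}^{lb−|S|} |N̄_S(v_j)| (as integers). Then every k-defective clique C of g with S ∪ {v_i} ⊆ C ⊆ V(g) has |C| ≤ lb (correctness of the degree-sequence-based reduction rule RR3). -/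
open Finset

variable {V : Type*} [Fintype V] [DecidableEq V]

/-- The set of non-neighbors of `u` among `S \ {u}`. -/
def nonNbrs (G : SimpleGraph V) [DecidableRel G.Adj] (S : Finset V) (u : V) : Finset V :=
  (S.erase u).filter fun w => ¬ G.Adj u w

set_option linter.unusedSectionVars false
set_option linter.unusedVariables false

lemma aux_sorted_sum {t : ℕ} (f : Fin t → ℕ)
    (hf : ∀ a b : Fin t, a ≤ b → f a ≤ f b) :
    ∀ (r : ℕ) (J : Finset (Fin t)), r ≤ J.card →
      ∑ j ∈ univ.filter (fun j : Fin t => (j : ℕ) < r), f j ≤ ∑ j ∈ J, f j := by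
  intro r
  induction r with
  | zero =>
    intro J _
    simp
  | succ r ih =>
    intro J hJ
    have hJne : J.Nonempty := card_pos.mp (by omega)
    set M := J.max' hJne with hMdef
    have hMJ : M ∈ J := J.max'_mem hJne
    have hrM : r ≤ (M : ℕ) := by
      have hsub : J.image Fin.val ⊆ Finset.range ((M : ℕ) + 1) := by
        intro x hx
        simp only [mem_image] at hx
        obtain ⟨j, hj, rfl⟩ := hx
        simp only [Finset.mem_range]
        have := J.le_max' j hj
        omega
      have hcard : (J.image Fin.val).card = J.card :=
        card_image_of_injective _ Fin.val_injective
      have := card_le_card hsub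
      simp only [hcard, Finset.card_range] at this
      omega
    have hrt : r < t := lt_of_le_of_lt hrM M.isLt
    set r' : Fin t := ⟨r, hrt⟩ with hr'def
    have hsplit : univ.filter (fun j : Fin t => (j : ℕ) < r + 1)
        = insert r' (univ.filter (fun j : Fin t => (j : ℕ) < r)) := by
      ext j
      simp only [mem_insert, mem_filter, mem_univ, true_and, hr'def, Fin.ext_iff]
      omega
    have hr'notin : r' ∉ univ.filter (fun j : Fin t => (j : ℕ) < r) := by
      simp [hr'def]
    rw [hsplit, sum_insert hr'notin]
    have herase : r ≤ (J.erase M).card := by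
      rw [card_erase_of_mem hMJ]; omega
    have h1 := ih (J.erase M) herase
    have h2 : f r' ≤ f M := hf r' M (by simp [hr'def, Fin.le_def, hrM])
    calc f r' + ∑ j ∈ univ.filter (fun j : Fin t => (j : ℕ) < r), f j
        ≤ f M + ∑ j ∈ J.erase M, f j := Nat.add_le_add h2 h1
      _ = ∑ j ∈ J, f j := Finset.add_sum_erase J f hMJ

/-- Correctness of the degree-sequence-based reduction rule RR3: let
`v 0, v 1, …, v (t-1)` enumerate `V(g) \ S` in non-decreasing order of `|N̄_S(·)|`
(the index `i` here is 0-based, so position `i` corresponds to the 1-based index `i+1`).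
If `i + 1 > lb − |S|` and `|N̄_S(v i)| > k − |Ē(S)| − ∑_{j ≤ lb−|S|} |N̄_S(v j)|`
(as integers), then every `k`-defective clique `C` with `S ∪ {v i} ⊆ C` has `|C| ≤ lb`. -/
theorem rr3_correct (G : SimpleGraph V) [DecidableRel G.Adj] (k : ℕ) (S : Finset V)
    {t : ℕ} (v : Fin t → V) (hinj : Function.Injective v)
    (himg : Finset.image v Finset.univ = Finset.univ \ S)
    (hmono : ∀ j₁ j₂ : Fin t, j₁ ≤ j₂ →
      (nonNbrs G S (v j₁)).card ≤ (nonNbrs G S (v j₂)).card)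
    (lb : ℕ) (hlb : S.card ≤ lb)
    (i : Fin t) (hi1 : lb - S.card < (i : ℕ) + 1)
    (hi2 : (k : ℤ) - ((nonEdges G S).card : ℤ)
        - ∑ j ∈ Finset.univ.filter (fun j : Fin t => (j : ℕ) < lb - S.card),
            ((nonNbrs G S (v j)).card : ℤ)
      < ((nonNbrs G S (v i)).card : ℤ))
    (C : Finset V) (hSC : insert (v i) S ⊆ C) (hC : (nonEdges G C).card ≤ k) :
    C.card ≤ lb := by
  by_contra hcon
  push_neg at hcon
  set r := lb - S.card with hrdef
  -- basic facts
  have hSsubC : S ⊆ C := (subset_insert _ _).trans hSC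
  have hviC : v i ∈ C := hSC (mem_insert_self _ _)
  have hvnotS : ∀ j : Fin t, v j ∉ S := by
    intro j hj
    have : v j ∈ Finset.image v Finset.univ := mem_image_of_mem v (mem_univ j)
    rw [himg, mem_sdiff] at this
    exact this.2 hj
  -- index set of C \ S
  set J : Finset (Fin t) := univ.filter (fun j => v j ∈ C) with hJdef
  have hiJ : i ∈ J := by simp [hJdef, hviC]
  have hJimg : J.image v = C \ S := by
    ext u
    simp only [hJdef, mem_image, mem_filter, mem_univ, true_and, mem_sdiff]
    constructor
    · rintro ⟨j, hj, rfl⟩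
      exact ⟨hj, hvnotS j⟩
    · rintro ⟨hu, huS⟩
      have : u ∈ Finset.image v Finset.univ := by
        rw [himg, mem_sdiff]; exact ⟨mem_univ u, huS⟩
      obtain ⟨j, _, rfl⟩ := mem_image.mp this
      exact ⟨j, hu, rfl⟩
  have hJcard : J.card = C.card - S.card := by
    rw [← card_image_of_injective J hinj, hJimg, card_sdiff_of_subset hSsubC]
  have hJbig : r + 1 ≤ J.card := by
    have := card_le_card hSsubC
    omega
  -- pair sets
  set P : Fin t → Finset (Sym2 V) := fun j => (nonNbrs G S (v j)).image (fun w => s(v j, w))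
    with hPdef
  have hmemP : ∀ j (e : Sym2 V), e ∈ P j ↔
      ∃ w, w ∈ S ∧ w ≠ v j ∧ ¬ G.Adj (v j) w ∧ e = s(v j, w) := by
    intro j e
    simp only [hPdef, mem_image, nonNbrs, mem_filter, mem_erase]
    constructor
    · rintro ⟨w, ⟨⟨hw1, hw2⟩, hw3⟩, rfl⟩
      exact ⟨w, hw2, hw1, hw3, rfl⟩
    · rintro ⟨w, hw1, hw2, hw3, rfl⟩
      exact ⟨w, ⟨⟨hw2, hw1⟩, hw3⟩, rfl⟩
  have hPcard : ∀ j, (P j).card = (nonNbrs G S (v j)).card := by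
    intro j
    apply card_image_of_injOn
    intro a ha b hb hab
    simp only [mem_coe, nonNbrs, mem_filter, mem_erase] at ha hb
    rw [Sym2.eq, Sym2.rel_iff'] at hab
    simp only [Prod.mk.injEq, Prod.swap_prod_mk] at hab
    rcases hab with ⟨h1, h2⟩ | ⟨h1, h2⟩
    · exact h2
    · exact absurd h2 ha.1.1
  have hPsubC : ∀ j ∈ J, P j ⊆ nonEdges G C := by
    intro j hj e he
    rw [hmemP] at he
    obtain ⟨w, hwS, hwj, hadj, rfl⟩ := he
    rw [Sym2.eq_swap, mem_nonEdges]
    have hjC : v j ∈ C := by simpa [hJdef] using hj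
    exact ⟨hSsubC hwS, hjC, hwj, fun h => hadj h.symm⟩
  have hPdisj : (J : Set (Fin t)).PairwiseDisjoint P := by
    intro a _ b _ hab
    apply Finset.disjoint_left.mpr
    intro e he1 he2
    rw [hmemP] at he1 he2
    obtain ⟨w1, hw1S, hne1, had1, rfl⟩ := he1
    obtain ⟨w2, hw2S, hne2, had2, he⟩ := he2
    rw [Sym2.eq, Sym2.rel_iff'] at he
    simp only [Prod.mk.injEq, Prod.swap_prod_mk] at he
    rcases he with ⟨h1, h2⟩ | ⟨h1, h2⟩
    · exact hab (hinj h1)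
    · exact hvnotS a (by rw [h1]; exact hw2S)
  have hSsubNE : nonEdges G S ⊆ nonEdges G C := by
    intro e he
    induction e using Sym2.ind with
    | _ x y =>
      rw [mem_nonEdges] at he ⊢
      exact ⟨hSsubC he.1, hSsubC he.2.1, he.2.2⟩
  have hNEdisj : Disjoint (nonEdges G S) (J.biUnion P) := by
    apply Finset.disjoint_left.mpr
    intro e he1 he2
    rw [mem_biUnion] at he2
    obtain ⟨j, _, hej⟩ := he2
    rw [hmemP] at hej
    obtain ⟨w, _, _, _, rfl⟩ := hej
    rw [mem_nonEdges] at he1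
    exact hvnotS j he1.1
  have hbigsub : nonEdges G S ∪ J.biUnion P ⊆ nonEdges G C := by
    apply union_subset hSsubNE
    exact biUnion_subset.mpr hPsubC
  have hcount : (nonEdges G S).card + ∑ j ∈ J, (nonNbrs G S (v j)).card
      ≤ (nonEdges G C).card := by
    calc (nonEdges G S).card + ∑ j ∈ J, (nonNbrs G S (v j)).card
        = (nonEdges G S).card + ∑ j ∈ J, (P j).card := by
          simp_rw [hPcard]
      _ = (nonEdges G S).card + (J.biUnion P).card := by
          rw [card_biUnion hPdisj]
      _ = (nonEdges G S ∪ J.biUnion P).card := (card_union_of_disjoint hNEdisj).symm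
      _ ≤ (nonEdges G C).card := card_le_card hbigsub
  -- sum split
  have hsum : ∑ j ∈ univ.filter (fun j : Fin t => (j : ℕ) < r), (nonNbrs G S (v j)).card
      + (nonNbrs G S (v i)).card ≤ ∑ j ∈ J, (nonNbrs G S (v j)).card := by
    have herase : r ≤ (J.erase i).card := by
      rw [card_erase_of_mem hiJ]; omega
    have h1 := aux_sorted_sum (fun j => (nonNbrs G S (v j)).card) hmono r (J.erase i) herase
    have h2 := Finset.add_sum_erase J (fun j => (nonNbrs G S (v j)).card) hiJ
    beta_reduce at h1 h2
    omega
  -- conclude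
  have h3 : (nonEdges G S).card
      + ∑ j ∈ univ.filter (fun j : Fin t => (j : ℕ) < r), (nonNbrs G S (v j)).card
        + (nonNbrs G S (v i)).card ≤ k := by
    have := le_trans hcount hC
    omega
  have h4 : ((nonEdges G S).card : ℤ)
      + ((∑ j ∈ univ.filter (fun j : Fin t => (j : ℕ) < r), (nonNbrs G S (v j)).card : ℕ) : ℤ)
      + ((nonNbrs G S (v i)).card : ℤ) ≤ (k : ℤ) := by exact_mod_cast h3
  rw [Nat.cast_sum] at h4
  linarith [hi2, h4]
end

section
/- Let g be a finite simple graph, k a natural number, S ⊆ V(g), and let π_1, …, π_c be a partition of V(g)\S into independent sets of g. For each i, enumerate π_i as v_{i,1}, …, v_{i,|π_i|} in non-decreasing order of |N̄_S(·)| and define the weight w(v_{i,j}) = |N̄_S(v_{i,j})| + j − 1. Let u_1, u_2, …, u_t be an enumeration of V(g)\S in non-decreasing order of w(·). Then for every k-defective clique C of g with S ⊆ C ⊆ V(g), ∑_{j=1}^{|C\S|} w(u_j) ≤ k − |Ē(S)|; consequently |C| ≤ |S| + i*, where i* is the largest index i such that ∑_{j=1}^{i} w(u_j) ≤ k − |Ē(S)|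 (correctness of the improved coloring-based upper bound UB1). -/
open Finset

variable {V : Type*} [Fintype V] [DecidableEq V]

theorem emb_le {n m : ℕ} (f : Fin n ↪o Fin m) (i : Fin n) : (i:ℕ) ≤ (f i : ℕ) := by
  induction' hm : (i : ℕ) with a ih generalizing i
  · exact Nat.zero_le _
  · have hlt : (⟨a, by omega⟩ : Fin n) < i := by simp [Fin.lt_def, hm]
    have h1 := f.strictMono hlt
    have h2 := ih ⟨a, by omega⟩ rfl
    simp only [Fin.lt_def, Fin.val_mk] at h1 h2
    omega

theorem filter_lt_eq_image {n d : ℕ} (h : d ≤ n) :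
    Finset.univ.filter (fun j : Fin n => (j : ℕ) < d)
      = Finset.image (Fin.castLE h) Finset.univ := by
  ext j
  simp only [Finset.mem_filter, Finset.mem_univ, true_and, Finset.mem_image]
  constructor
  · intro hj; exact ⟨⟨j, hj⟩, rfl⟩
  · rintro ⟨ℓ, rfl⟩; exact ℓ.2

theorem card_filter_lt {n d : ℕ} (h : d ≤ n) :
    (Finset.univ.filter (fun j : Fin n => (j : ℕ) < d)).card = d := by
  rw [filter_lt_eq_image h, Finset.card_image_of_injective _ (Fin.castLE_injective h)]
  simp

theorem prefix_le {n d : ℕ} (f : Fin n → ℕ) (hf : Monotone f)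
    (J : Finset (Fin n)) (hJ : J.card = d) :
    ∑ j ∈ Finset.univ.filter (fun j : Fin n => (j : ℕ) < d), f j ≤ ∑ j ∈ J, f j := by
  have hdn : d ≤ n := by
    have := Finset.card_le_univ J
    simpa [hJ] using this
  set e := J.orderEmbOfFin hJ with he
  have himg : Finset.image (fun ℓ => e ℓ) Finset.univ = J := by
    ext a
    simp only [Finset.mem_image, Finset.mem_univ, true_and]
    constructor
    · rintro ⟨ℓ, rfl⟩; exact Finset.orderEmbOfFin_mem J hJ ℓ
    · intro ha
      have : a ∈ Set.range e := by rw [he, Finset.range_orderEmbOfFin]; exact ha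
      obtain ⟨ℓ, hℓ⟩ := this; exact ⟨ℓ, hℓ⟩
  rw [filter_lt_eq_image hdn,
    Finset.sum_image (fun a _ b _ hab => Fin.castLE_injective hdn hab),
    ← himg, Finset.sum_image (fun a _ b _ hab => e.injective hab)]
  refine Finset.sum_le_sum fun ℓ _ => hf ?_
  have := emb_le e ℓ
  simpa [Fin.le_def] using this

theorem sum_nonNbrs_eq (G : SimpleGraph V) [DecidableRel G.Adj] (T : Finset V) :
    ∑ v ∈ T, (nonNbrs G T v).card = 2 * (nonEdges G T).card := by
  set Q := (T ×ˢ T).filter (fun p : V × V => p.1 ≠ p.2 ∧ ¬ G.Adj p.1 p.2) with hQdef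
  have hQmem : ∀ p : V × V, p ∈ Q ↔ p.1 ∈ T ∧ p.2 ∈ T ∧ p.1 ≠ p.2 ∧ ¬ G.Adj p.1 p.2 := by
    intro p
    simp [hQdef, Finset.mem_filter, Finset.mem_product, and_assoc]
  have h1 : Q.card = ∑ v ∈ T, (nonNbrs G T v).card := by
    rw [Finset.card_eq_sum_card_fiberwise (f := fun p : V × V => p.1) (t := T)
      (fun p hp => ((hQmem p).1 hp).1)]
    refine Finset.sum_congr rfl fun v hv => ?_
    have hfib : Q.filter (fun p : V × V => p.1 = v) = {v} ×ˢ nonNbrs G T v := by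
      ext p
      simp only [Finset.mem_filter, Finset.mem_product, Finset.mem_singleton, hQmem,
        nonNbrs, Finset.mem_erase]
      constructor
      · rintro ⟨⟨hp1, hp2, hp3, hp4⟩, hp5⟩
        exact ⟨hp5, ⟨Ne.symm (hp5 ▸ hp3), hp2⟩, hp5 ▸ hp4⟩
      · rintro ⟨hp5, ⟨hne, hp2⟩, hp4⟩
        subst hp5
        exact ⟨⟨hv, hp2, Ne.symm hne, hp4⟩, rfl⟩
    rw [hfib, Finset.card_product, Finset.card_singleton, one_mul]
  have him : nonEdges G T = Q.image (fun p : V × V => s(p.1, p.2)) := by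
    simp only [nonEdges, hQdef]
  have h2 : Q.card = 2 * (nonEdges G T).card := by
    rw [Finset.card_eq_sum_card_image (fun p : V × V => s(p.1, p.2)) Q]
    have hfc : ∀ e ∈ Q.image (fun p : V × V => s(p.1, p.2)),
        (Q.filter fun p : V × V => s(p.1, p.2) = e).card = 2 := by
      intro e he
      obtain ⟨p, hp, rfl⟩ := Finset.mem_image.1 he
      obtain ⟨hp1, hp2, hp3, hp4⟩ := (hQmem p).1 hp
      have hfib : (Q.filter fun q : V × V => s(q.1, q.2) = s(p.1, p.2)) = {p, p.swap} := by
        ext q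
        simp only [Finset.mem_filter, Finset.mem_insert, Finset.mem_singleton, Sym2.eq_iff]
        constructor
        · rintro ⟨hq, (⟨e1, e2⟩ | ⟨e1, e2⟩)⟩
          · left; exact Prod.ext e1 e2
          · right; exact Prod.ext e1 e2
        · rintro (rfl | rfl)
          · exact ⟨hp, Or.inl ⟨rfl, rfl⟩⟩
          · refine ⟨(hQmem p.swap).2 ⟨hp2, hp1, Ne.symm hp3, fun h => hp4 h.symm⟩, ?_⟩
            right; exact ⟨rfl, rfl⟩
      rw [hfib]
      have hne : p ≠ p.swap := by
        intro h
        exact hp3 (by conv_lhs => rw [h, Prod.fst_swap])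
      rw [Finset.card_insert_of_notMem (by simpa using hne), Finset.card_singleton]
    rw [Finset.sum_congr rfl hfc, Finset.sum_const, smul_eq_mul, ← him, mul_comm]
  omega
/-- Correctness of the improved coloring-based upper bound UB1: let `π 0, …, π (c-1)` be
a partition of `V(g) \ S` into independent sets, each part `π i` enumerated as
`vfun i 0, …, vfun i (|π i| − 1)` in non-decreasing order of `|N̄_S(·)|`, and assign the
weight `w (vfun i j) = |N̄_S(vfun i j)| + j` (0-based `j`, i.e. `|N̄_S| + j − 1` for the
1-based index).  Let `u 0, …, u (t-1)` enumerate `V(g) \ S` in non-decreasing order of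
`w`.  Then every `k`-defective clique `C` with `S ⊆ C` satisfies
`∑_{j < |C \ S|} w (u j) ≤ k − |Ē(S)|`, and consequently `|C| ≤ |S| + i*`, where `i*` is
the largest `i ≤ t` whose prefix sum of weights is at most `k − |Ē(S)|`. -/
theorem ub1_correct (G : SimpleGraph V) [DecidableRel G.Adj] (k : ℕ) (S : Finset V)
    {c : ℕ} (π : Fin c → Finset V)
    (hdisj : ∀ i j : Fin c, i ≠ j → Disjoint (π i) (π j))
    (hcover : Finset.univ.biUnion π = Finset.univ \ S)
    (hind : ∀ i : Fin c, ∀ x ∈ π i, ∀ y ∈ π i, ¬ G.Adj x y)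
    (vfun : (i : Fin c) → Fin ((π i).card) → V)
    (hinjv : ∀ i, Function.Injective (vfun i))
    (himgv : ∀ i, Finset.image (vfun i) Finset.univ = π i)
    (hmonov : ∀ i, ∀ j₁ j₂ : Fin ((π i).card), j₁ ≤ j₂ →
      (nonNbrs G S (vfun i j₁)).card ≤ (nonNbrs G S (vfun i j₂)).card)
    (w : V → ℕ)
    (hw : ∀ i : Fin c, ∀ j : Fin ((π i).card),
      w (vfun i j) = (nonNbrs G S (vfun i j)).card + (j : ℕ))
    {t : ℕ} (u : Fin t → V) (hinju : Function.Injective u)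
    (himgu : Finset.image u Finset.univ = Finset.univ \ S)
    (hmonou : ∀ j₁ j₂ : Fin t, j₁ ≤ j₂ → w (u j₁) ≤ w (u j₂))
    (istar : ℕ)
    (histar : IsGreatest {i : ℕ | i ≤ t ∧
      ∑ j ∈ Finset.univ.filter (fun j : Fin t => (j : ℕ) < i), ((w (u j) : ℤ))
        ≤ (k : ℤ) - ((nonEdges G S).card : ℤ)} istar)
    (C : Finset V) (hSC : S ⊆ C) (hC : (nonEdges G C).card ≤ k) :
    (∑ j ∈ Finset.univ.filter (fun j : Fin t => (j : ℕ) < (C \ S).card), ((w (u j) : ℤ))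
        ≤ (k : ℤ) - ((nonEdges G S).card : ℤ))
      ∧ C.card ≤ S.card + istar := by
  classical
  set D := C \ S with hDdef
  have hDS : ∀ v ∈ D, v ∉ S := fun v hv => (Finset.mem_sdiff.1 hv).2
  have hDC : D ⊆ C := Finset.sdiff_subset
  have hDuniv : D ⊆ Finset.univ \ S := fun v hv =>
    Finset.mem_sdiff.2 ⟨Finset.mem_univ v, hDS v hv⟩
  set m : Fin c → ℕ := fun i => (D ∩ π i).card with hmdef
  have hDcup : D = Finset.univ.biUnion (fun i => D ∩ π i) := by
    ext v
    simp only [Finset.mem_biUnion, Finset.mem_univ, true_and, Finset.mem_inter]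
    constructor
    · intro hv
      have hv2 : v ∈ Finset.univ.biUnion π := by rw [hcover]; exact hDuniv hv
      obtain ⟨i, _, hi⟩ := Finset.mem_biUnion.1 hv2
      exact ⟨i, hv, hi⟩
    · rintro ⟨i, hv, _⟩; exact hv
  have hpd : ((Finset.univ : Finset (Fin c)) : Set (Fin c)).PairwiseDisjoint (fun i => D ∩ π i) :=
    fun i _ j _ hij =>
      (hdisj i j hij).mono Finset.inter_subset_right Finset.inter_subset_right
  have hDcard : D.card = ∑ i, m i := by
    rw [hDcup]
    exact Finset.card_biUnion fun i _ j _ hij =>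
      (hdisj i j hij).mono Finset.inter_subset_right Finset.inter_subset_right
  have hsumD : ∀ f : V → ℕ, ∑ v ∈ D, f v = ∑ i, ∑ v ∈ D ∩ π i, f v := by
    intro f
    conv_lhs => rw [hDcup]
    exact Finset.sum_biUnion hpd
  set crossSum : ℕ := ∑ i, ∑ v ∈ D ∩ π i, (nonNbrs G S v).card with hcrossdef
  -- counting inequality
  have hcount : 2 * (nonEdges G S).card + 2 * crossSum + ∑ i, m i * (m i - 1) ≤ 2 * k := by
    have hc1 : ∑ v ∈ C, (nonNbrs G C v).card ≤ 2 * k := by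
      rw [sum_nonNbrs_eq]; omega
    rw [← Finset.sum_sdiff hSC, ← hDdef] at hc1
    -- bound for v ∈ S
    have hS : ∀ v ∈ S, (nonNbrs G S v).card + (D.filter fun x => ¬ G.Adj v x).card
        ≤ (nonNbrs G C v).card := by
      intro v hv
      have hsub : nonNbrs G S v ∪ (D.filter fun x => ¬ G.Adj v x) ⊆ nonNbrs G C v := by
        intro x hx
        rcases Finset.mem_union.1 hx with hx | hx
        · obtain ⟨hx1, hx2⟩ := Finset.mem_filter.1 hx
          exact Finset.mem_filter.2 ⟨Finset.mem_erase.2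
            ⟨(Finset.mem_erase.1 hx1).1, hSC (Finset.mem_erase.1 hx1).2⟩, hx2⟩
        · obtain ⟨hx1, hx2⟩ := Finset.mem_filter.1 hx
          refine Finset.mem_filter.2 ⟨Finset.mem_erase.2 ⟨?_, hDC hx1⟩, hx2⟩
          intro h; exact hDS x hx1 (h ▸ hv)
      have hdis : Disjoint (nonNbrs G S v) (D.filter fun x => ¬ G.Adj v x) := by
        refine Finset.disjoint_left.2 fun x hx hx2 => ?_
        have hxS : x ∈ S := (Finset.mem_erase.1 (Finset.mem_filter.1 hx).1).2
        exact hDS x (Finset.mem_filter.1 hx2).1 hxS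
      calc (nonNbrs G S v).card + (D.filter fun x => ¬ G.Adj v x).card
          = (nonNbrs G S v ∪ D.filter fun x => ¬ G.Adj v x).card :=
            (Finset.card_union_of_disjoint hdis).symm
        _ ≤ (nonNbrs G C v).card := Finset.card_le_card hsub
    -- bound for v ∈ D ∩ π i
    have hDi : ∀ i : Fin c, ∀ v ∈ D ∩ π i,
        (nonNbrs G S v).card + (m i - 1) ≤ (nonNbrs G C v).card := by
      intro i v hv
      obtain ⟨hvD, hvπ⟩ := Finset.mem_inter.1 hv
      have hsub : nonNbrs G S v ∪ (D ∩ π i).erase v ⊆ nonNbrs G C v := by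
        intro x hx
        rcases Finset.mem_union.1 hx with hx | hx
        · obtain ⟨hx1, hx2⟩ := Finset.mem_filter.1 hx
          exact Finset.mem_filter.2 ⟨Finset.mem_erase.2
            ⟨(Finset.mem_erase.1 hx1).1, hSC (Finset.mem_erase.1 hx1).2⟩, hx2⟩
        · obtain ⟨hxne, hxmem⟩ := Finset.mem_erase.1 hx
          obtain ⟨hxD, hxπ⟩ := Finset.mem_inter.1 hxmem
          exact Finset.mem_filter.2 ⟨Finset.mem_erase.2 ⟨hxne, hDC hxD⟩,
            hind i v hvπ x hxπ⟩
      have hdis : Disjoint (nonNbrs G S v) ((D ∩ π i).erase v) := by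
        refine Finset.disjoint_left.2 fun x hx hx2 => ?_
        have hxS : x ∈ S := (Finset.mem_erase.1 (Finset.mem_filter.1 hx).1).2
        exact hDS x (Finset.mem_inter.1 (Finset.mem_erase.1 hx2).2).1 hxS
      calc (nonNbrs G S v).card + (m i - 1)
          = (nonNbrs G S v ∪ (D ∩ π i).erase v).card := by
            rw [Finset.card_union_of_disjoint hdis, Finset.card_erase_of_mem hv]
        _ ≤ (nonNbrs G C v).card := Finset.card_le_card hsub
    -- double counting of cross non-edges
    have hdouble : ∑ v ∈ S, (D.filter fun x => ¬ G.Adj v x).card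
        = ∑ v ∈ D, (nonNbrs G S v).card := by
      have e1 : ∀ v, (D.filter fun x => ¬ G.Adj v x).card
          = ∑ x ∈ D, if ¬ G.Adj v x then 1 else 0 := fun v => Finset.card_filter _ _
      have e2 : ∀ x ∈ D, (nonNbrs G S x).card = ∑ v ∈ S, if ¬ G.Adj v x then 1 else 0 := by
        intro x hx
        have : nonNbrs G S x = S.filter fun v => ¬ G.Adj v x := by
          rw [nonNbrs, Finset.erase_eq_of_notMem (hDS x hx)]
          apply Finset.filter_congr
          intro v _
          simp [G.adj_comm]
        rw [this, Finset.card_filter]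
      rw [Finset.sum_congr rfl fun v _ => e1 v, Finset.sum_comm,
        Finset.sum_congr rfl e2]
    have hsum1 : ∑ v ∈ S, ((nonNbrs G S v).card + (D.filter fun x => ¬ G.Adj v x).card)
        ≤ ∑ v ∈ S, (nonNbrs G C v).card := Finset.sum_le_sum hS
    have hsum2 : ∑ i, ∑ v ∈ D ∩ π i, ((nonNbrs G S v).card + (m i - 1))
        ≤ ∑ v ∈ D, (nonNbrs G C v).card := by
      rw [hsumD]
      exact Finset.sum_le_sum fun i _ => Finset.sum_le_sum (hDi i)
    rw [Finset.sum_add_distrib, sum_nonNbrs_eq, hdouble, hsumD] at hsum1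
    have hsum2' : crossSum + ∑ i, m i * (m i - 1)
        ≤ ∑ v ∈ D, (nonNbrs G C v).card := by
      refine le_trans (le_of_eq ?_) hsum2
      rw [hcrossdef, ← Finset.sum_add_distrib]
      refine Finset.sum_congr rfl fun i _ => ?_
      rw [Finset.sum_add_distrib, Finset.sum_const, smul_eq_mul]
    omega
  -- weight inequality
  have hmle : ∀ i, m i ≤ (π i).card := fun i =>
    Finset.card_le_card Finset.inter_subset_right
  set Ti : Fin c → Finset V := fun i =>
    Finset.image (vfun i) (Finset.univ.filter fun ℓ => (ℓ : ℕ) < m i) with hTidef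
  set T : Finset V := Finset.univ.biUnion Ti with hTdef
  have hTiπ : ∀ i, Ti i ⊆ π i := by
    intro i
    rw [← himgv i]
    exact Finset.image_subset_image (Finset.filter_subset _ _)
  have hTicard : ∀ i, (Ti i).card = m i := by
    intro i
    rw [hTidef]
    rw [Finset.card_image_of_injective _ (hinjv i), card_filter_lt (hmle i)]
  have hTuniv : T ⊆ Finset.univ \ S := by
    intro x hx
    obtain ⟨i, _, hi⟩ := Finset.mem_biUnion.1 hx
    have : x ∈ Finset.univ.biUnion π := Finset.mem_biUnion.2 ⟨i, Finset.mem_univ i, hTiπ i hi⟩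
    rwa [hcover] at this
  have hTcard : T.card = D.card := by
    rw [hTdef, Finset.card_biUnion fun i _ j _ hij =>
      (hdisj i j hij).mono (hTiπ i) (hTiπ j), hDcard]
    exact Finset.sum_congr rfl fun i _ => hTicard i
  -- the prefix sum bound
  set P : ℕ := ∑ j ∈ Finset.univ.filter (fun j : Fin t => (j : ℕ) < D.card), w (u j)
    with hPdef
  have hweight : 2 * P ≤ 2 * crossSum + ∑ i, m i * (m i - 1) := by
    -- step A
    set J : Finset (Fin t) := Finset.univ.filter (fun j => u j ∈ T) with hJdef
    have hJimg : Finset.image u J = T := by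
      apply Finset.Subset.antisymm
      · intro x hx
        obtain ⟨j, hj, rfl⟩ := Finset.mem_image.1 hx
        exact (Finset.mem_filter.1 hj).2
      · intro x hx
        have hx2 : x ∈ Finset.image u Finset.univ := by rw [himgu]; exact hTuniv hx
        obtain ⟨j, _, rfl⟩ := Finset.mem_image.1 hx2
        exact Finset.mem_image.2 ⟨j, Finset.mem_filter.2 ⟨Finset.mem_univ j, hx⟩, rfl⟩
    have hJcard : J.card = D.card := by
      rw [← hTcard, ← hJimg, Finset.card_image_of_injective _ hinju]
    have hA : P ≤ ∑ v ∈ T, w v := by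
      rw [hPdef, ← hJimg, Finset.sum_image fun a _ b _ hab => hinju hab]
      exact prefix_le (fun j => w (u j)) (fun a b hab => hmonou a b hab) J hJcard
    -- step B : per-part sums
    have hB : ∀ i : Fin c, 2 * ∑ v ∈ Ti i, w v
        ≤ 2 * ∑ v ∈ D ∩ π i, (nonNbrs G S v).card + m i * (m i - 1) := by
      intro i
      set Ji : Finset (Fin (π i).card) :=
        Finset.univ.filter (fun j => vfun i j ∈ D ∩ π i) with hJidef
      have hJiimg : Finset.image (vfun i) Ji = D ∩ π i := by
        apply Finset.Subset.antisymm
        · intro x hx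
          obtain ⟨j, hj, rfl⟩ := Finset.mem_image.1 hx
          exact (Finset.mem_filter.1 hj).2
        · intro x hx
          have hx2 : x ∈ Finset.image (vfun i) Finset.univ := by
            rw [himgv i]; exact (Finset.mem_inter.1 hx).2
          obtain ⟨j, _, rfl⟩ := Finset.mem_image.1 hx2
          exact Finset.mem_image.2 ⟨j, Finset.mem_filter.2 ⟨Finset.mem_univ j, hx⟩, rfl⟩
      have hJicard : Ji.card = m i := by
        simp only [hmdef]
        rw [← hJiimg, Finset.card_image_of_injective _ (hinjv i)]
      have hsplit : ∑ v ∈ Ti i, w v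
          = (∑ ℓ ∈ Finset.univ.filter (fun ℓ : Fin (π i).card => (ℓ : ℕ) < m i),
              (nonNbrs G S (vfun i ℓ)).card)
            + ∑ ℓ ∈ Finset.univ.filter (fun ℓ : Fin (π i).card => (ℓ : ℕ) < m i), (ℓ : ℕ) := by
        rw [hTidef, Finset.sum_image fun a _ b _ hab => hinjv i hab,
          ← Finset.sum_add_distrib]
        exact Finset.sum_congr rfl fun ℓ _ => hw i ℓ
      have hidx : 2 * ∑ ℓ ∈ Finset.univ.filter (fun ℓ : Fin (π i).card => (ℓ : ℕ) < m i),
          (ℓ : ℕ) = m i * (m i - 1) := by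
        rw [filter_lt_eq_image (hmle i),
          Finset.sum_image fun a _ b _ hab => Fin.castLE_injective (hmle i) hab]
        have : ∑ ℓ : Fin (m i), ((Fin.castLE (hmle i) ℓ : Fin (π i).card) : ℕ)
            = ∑ ℓ ∈ Finset.range (m i), ℓ := by
          rw [← Fin.sum_univ_eq_sum_range]
          rfl
        rw [this, mul_comm, Finset.sum_range_id_mul_two]
      have hNle : ∑ ℓ ∈ Finset.univ.filter (fun ℓ : Fin (π i).card => (ℓ : ℕ) < m i),
          (nonNbrs G S (vfun i ℓ)).card ≤ ∑ v ∈ D ∩ π i, (nonNbrs G S v).card := by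
        rw [← hJiimg, Finset.sum_image fun a _ b _ hab => hinjv i hab]
        exact prefix_le (fun j => (nonNbrs G S (vfun i j)).card)
          (fun a b hab => hmonov i a b hab) Ji hJicard
      omega
    calc 2 * P ≤ 2 * ∑ v ∈ T, w v := by omega
      _ = ∑ i, 2 * ∑ v ∈ Ti i, w v := by
          rw [hTdef, Finset.sum_biUnion fun i _ j _ hij =>
            (hdisj i j hij).mono (hTiπ i) (hTiπ j), Finset.mul_sum]
      _ ≤ ∑ i, (2 * ∑ v ∈ D ∩ π i, (nonNbrs G S v).card + m i * (m i - 1)) :=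
          Finset.sum_le_sum fun i _ => hB i
      _ = 2 * crossSum + ∑ i, m i * (m i - 1) := by
          rw [Finset.sum_add_distrib, hcrossdef, Finset.mul_sum]
  -- conclude
  have hkey : 2 * P + 2 * (nonEdges G S).card ≤ 2 * k := by omega
  have hg1 : ∑ j ∈ Finset.univ.filter (fun j : Fin t => (j : ℕ) < D.card), ((w (u j) : ℤ))
      ≤ (k : ℤ) - ((nonEdges G S).card : ℤ) := by
    have : (∑ j ∈ Finset.univ.filter (fun j : Fin t => (j : ℕ) < D.card), ((w (u j) : ℤ)))
        = (P : ℤ) := by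
      rw [hPdef]; push_cast; rfl
    rw [this]
    have h2 : (P : ℤ) * 2 + 2 * ((nonEdges G S).card : ℤ) ≤ 2 * (k : ℤ) := by
      exact_mod_cast by omega
    linarith
  refine ⟨hg1, ?_⟩
  have hDt : D.card ≤ t := by
    calc D.card ≤ (Finset.univ \ S).card := Finset.card_le_card hDuniv
      _ = (Finset.image u Finset.univ).card := by rw [himgu]
      _ ≤ (Finset.univ : Finset (Fin t)).card := Finset.card_image_le
      _ = t := by simp
  have hmem : D.card ∈ {i : ℕ | i ≤ t ∧
      ∑ j ∈ Finset.univ.filter (fun j : Fin t => (j : ℕ) < i), ((w (u j) : ℤ))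
        ≤ (k : ℤ) - ((nonEdges G S).card : ℤ)} := ⟨hDt, hg1⟩
  have hle := histar.2 hmem
  have hCcard : D.card + S.card = C.card := Finset.card_sdiff_add_card_eq_card hSC
  omega
end

section
/- Let g be a finite simple graph, k a natural number, S ⊆ V(g), and let π_1, …, π_c be a partition of V(g)\S into independent sets of g. Then every k-defective clique C of g with S ⊆ C ⊆ V(g) satisfies |C| ≤ |S| + ∑_{i=1}^{c} min( ⌊(1 + √(8k + 1))/2⌋, |π_i| ) (correctness of the graph coloring-based upper bound of Chen et al.). -/
open Finset

variable {V : Type*} [Fintype V] [DecidableEq V]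

lemma aux_floor (k m : ℕ) (h : m.choose 2 ≤ k) :
    (m : ℤ) ≤ ⌊(1 + Real.sqrt (8 * (k : ℝ) + 1)) / 2⌋ := by
  rw [Int.le_floor]
  have hnn : (0:ℝ) ≤ 8 * (k : ℝ) + 1 := by positivity
  have hs := Real.sq_sqrt hnn
  have hs0 := Real.sqrt_nonneg (8 * (k : ℝ) + 1)
  have h2 : (m * (m - 1) : ℕ) ≤ 2 * k := by
    have he : 2 * m.choose 2 = m * (m - 1) := by
      cases m with
      | zero => simp
      | succ n =>
        rw [Nat.choose_two_right, Nat.succ_sub_one]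
        exact Nat.mul_div_cancel' ((Nat.even_mul_succ_self n).two_dvd.mul_left 0
          |>.mul_left 1 |> (fun _ => (by
            have : Even ((n+1) * n) := (mul_comm n (n+1)) ▸ Nat.even_mul_succ_self n
            exact this.two_dvd)) )
    omega
  rcases Nat.eq_zero_or_pos m with hm | hm
  · subst hm
    push_cast
    nlinarith
  · have h2' : ((m : ℝ) * ((m : ℝ) - 1)) ≤ 2 * k := by
      have : ((m * (m-1) : ℕ) : ℝ) ≤ ((2 * k : ℕ) : ℝ) := by exact_mod_cast h2
      push_cast [Nat.cast_sub hm] at this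
      linarith
    have hm1 : (1:ℝ) ≤ (m:ℝ) := by exact_mod_cast hm
    rw [le_div_iff₀ (by norm_num : (0:ℝ) < 2)]
    push_cast
    have hkey : 2 * (m:ℝ) - 1 ≤ Real.sqrt (8 * (k : ℝ) + 1) :=
      Real.le_sqrt_of_sq_le (by nlinarith)
    linarith

/-- Correctness of the graph coloring-based upper bound of Chen et al.: if
`π 0, …, π (c-1)` is a partition of `V(g) \ S` into independent sets, then every
`k`-defective clique `C` with `S ⊆ C` satisfies
`|C| ≤ |S| + ∑ i, min(⌊(1 + √(8k + 1))/2⌋, |π i|)`. -/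
theorem chen_coloring_upper_bound (G : SimpleGraph V) [DecidableRel G.Adj] (k : ℕ)
    (S : Finset V) {c : ℕ} (π : Fin c → Finset V)
    (hdisj : ∀ i j : Fin c, i ≠ j → Disjoint (π i) (π j))
    (hcover : Finset.univ.biUnion π = Finset.univ \ S)
    (hind : ∀ i : Fin c, ∀ x ∈ π i, ∀ y ∈ π i, ¬ G.Adj x y)
    (C : Finset V) (hSC : S ⊆ C) (hC : (nonEdges G C).card ≤ k) :
    (C.card : ℤ) ≤ (S.card : ℤ)
      + ∑ i : Fin c, min (⌊(1 + Real.sqrt (8 * (k : ℝ) + 1)) / 2⌋) (((π i).card : ℤ)) := by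
  -- decompose C
  have hdecomp : C \ S = Finset.univ.biUnion (fun i => C ∩ π i) := by
    ext x
    simp only [mem_sdiff, mem_biUnion, mem_inter, mem_univ, true_and]
    constructor
    · rintro ⟨hxC, hxS⟩
      have : x ∈ Finset.univ.biUnion π := by
        rw [hcover]; simp [hxS]
      rcases mem_biUnion.1 this with ⟨i, _, hxi⟩
      exact ⟨i, hxC, hxi⟩
    · rintro ⟨i, hxC, hxi⟩
      refine ⟨hxC, fun hxS => ?_⟩
      have : x ∈ Finset.univ \ S := by
        rw [← hcover]; exact mem_biUnion.2 ⟨i, mem_univ _, hxi⟩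
      simp [hxS] at this
  have hcard : C.card = S.card + ∑ i : Fin c, (C ∩ π i).card := by
    have h1 : (C \ S).card + S.card = C.card := card_sdiff_add_card_eq_card hSC
    have h2 : (C \ S).card = ∑ i : Fin c, (C ∩ π i).card := by
      rw [hdecomp]
      exact card_biUnion (fun i _ j _ hij =>
        (hdisj i j hij).mono inter_subset_right inter_subset_right)
    omega
  have hterm : ∀ i : Fin c,
      ((C ∩ π i).card : ℤ) ≤ min (⌊(1 + Real.sqrt (8 * (k : ℝ) + 1)) / 2⌋) (((π i).card : ℤ)) := by
    intro i
    refine le_min ?_ (by exact_mod_cast card_le_card inter_subset_right)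
    apply aux_floor k
    calc ((C ∩ π i).card).choose 2
        = ((C ∩ π i).offDiag.image (Function.uncurry Sym2.mk)).card := (Sym2.card_image_offDiag _).symm
      _ ≤ (nonEdges G C).card := by
          apply card_le_card
          intro a ha
          rcases mem_image.1 ha with ⟨⟨x, y⟩, hxy, rfl⟩
          rw [mem_offDiag] at hxy
          obtain ⟨hx, hy, hne⟩ := hxy
          have hxC := (mem_inter.1 hx).1
          have hyC := (mem_inter.1 hy).1
          have hnadj := hind i x (mem_inter.1 hx).2 y (mem_inter.1 hy).2
          exact mem_image.2 ⟨(x, y), mem_filter.2 ⟨mem_product.2 ⟨hxC, hyC⟩, hne, hnadj⟩, rfl⟩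
      _ ≤ k := hC
  calc (C.card : ℤ) = (S.card : ℤ) + ∑ i : Fin c, ((C ∩ π i).card : ℤ) := by
        rw [hcard]; push_cast; ring
    _ ≤ _ := by
        gcongr with i
        exact hterm i
end

section
/- Let k and k′ be natural numbers with k < k′, and let γ, γ′ ∈ (1, 2) be real numbers satisfying γ^{k+3} − 2γ^{k+2} + 1 = 0 and γ′^{k′+3} − 2γ′^{k′+2} + 1 = 0. Then γ < γ′. In particular γ_k < γ_{2k} for every k ≥ 1, so the time complexity O*(γ_k^n) of the kDC framework is strictly better than the complexity O*(γ_{2k}^n) of the MADEC⁺ algorithm. -/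
lemma root_sum_eq_one (x : ℝ) (hx : 1 < x) (m : ℕ)
    (h : x ^ (m + 1) - 2 * x ^ m + 1 = 0) :
    ∑ j ∈ Finset.range m, (1 / x) ^ (j + 1) = 1 := by
  have hx0 : x ≠ 0 := by linarith
  have hx1 : (1 : ℝ) / x ≠ 1 := by
    intro hc
    have : x = 1 := by field_simp at hc; linarith
    linarith
  have hgeom := geom_sum_eq hx1 m
  have hsum : ∑ j ∈ Finset.range m, (1 / x) ^ (j + 1)
      = (1 / x) * (((1 / x) ^ m - 1) / ((1 / x) - 1)) := by
    rw [← hgeom, Finset.mul_sum]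
    exact Finset.sum_congr rfl fun j _ => pow_succ' _ _
  rw [hsum]
  have hxm : x ^ m ≠ 0 := pow_ne_zero _ hx0
  have hx1' : x - 1 ≠ 0 := by intro hc; nlinarith
  have h1mx : 1 - x ≠ 0 := by intro hc; nlinarith
  have hox : (1:ℝ) / x ^ m = (1/x)^m := (one_div_pow x m).symm
  rw [← hox]
  field_simp
  linear_combination h

/-- If `k < k'` and `γ, γ' ∈ (1, 2)` satisfy `γ^{k+3} − 2γ^{k+2} + 1 = 0` and
`γ'^{k'+3} − 2γ'^{k'+2} + 1 = 0`, then `γ < γ'`; in particular `γ_k < γ_{2k}`, so the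
time complexity `O*(γ_k^n)` of kDC is strictly better than `O*(γ_{2k}^n)` of MADEC⁺. -/
theorem gamma_strict_mono (k k' : ℕ) (hkk' : k < k') (γ γ' : ℝ)
    (hγ1 : 1 < γ) (hγ2 : γ < 2) (hγ'1 : 1 < γ') (hγ'2 : γ' < 2)
    (hroot : γ ^ (k + 3) - 2 * γ ^ (k + 2) + 1 = 0)
    (hroot' : γ' ^ (k' + 3) - 2 * γ' ^ (k' + 2) + 1 = 0) :
    γ < γ' := by
  have hS : ∑ j ∈ Finset.range (k + 2), (1 / γ) ^ (j + 1) = 1 :=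
    root_sum_eq_one γ hγ1 (k + 2) hroot
  have hS' : ∑ j ∈ Finset.range (k' + 2), (1 / γ') ^ (j + 1) = 1 :=
    root_sum_eq_one γ' hγ'1 (k' + 2) hroot'
  by_contra hle
  push_neg at hle
  -- partial sum over range (k+2) for γ' is < 1
  have hlt : ∑ j ∈ Finset.range (k + 2), (1 / γ') ^ (j + 1)
      < ∑ j ∈ Finset.range (k' + 2), (1 / γ') ^ (j + 1) := by
    apply Finset.sum_lt_sum_of_subset
      (Finset.range_subset_range.2 (by omega)) (i := k + 2)
    · simp; omega
    · simp
    · positivity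
    · intro j _ _; positivity
  rw [hS'] at hlt
  -- termwise comparison
  have hcmp : ∑ j ∈ Finset.range (k + 2), (1 / γ) ^ (j + 1)
      ≤ ∑ j ∈ Finset.range (k + 2), (1 / γ') ^ (j + 1) := by
    apply Finset.sum_le_sum
    intro j _
    apply pow_le_pow_left₀ (by positivity)
    apply one_div_le_one_div_of_le (by linarith) hle
  linarith
end

section
/- Let γ > 1 be a real number and k a natural number such that γ^{k+3} − 2γ^{k+2} + 1 ≥ 0. Then for every natural number m with m ≥ k + 2, the inequality γ^{m−1} + γ^{m−2} + ⋯ + γ^{m−k−1} + γ^{m−k−2} ≤ γ^m holds (the key inequality establishing, by induction on search-tree nodes, that the number of leaf nodes of the kDC search tree rooted at a node of size s is at most γ_k^s). -/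
open Finset

/-- The key inequality in the leaf-count analysis of the kDC search tree: if `γ > 1`
satisfies `γ^{k+3} − 2γ^{k+2} + 1 ≥ 0`, then for every `m ≥ k + 2`,
`γ^{m−1} + γ^{m−2} + ⋯ + γ^{m−k−2} ≤ γ^m` (a sum of `k + 2` terms). -/
theorem kdc_key_inequality (k : ℕ) (γ : ℝ) (hγ : 1 < γ)
    (hroot : 0 ≤ γ ^ (k + 3) - 2 * γ ^ (k + 2) + 1)
    (m : ℕ) (hm : k + 2 ≤ m) :
    ∑ j ∈ Finset.Icc 1 (k + 2), γ ^ (m - j) ≤ γ ^ m := by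
  obtain ⟨t, rfl⟩ : ∃ t, m = k + 2 + t := ⟨m - (k + 2), by omega⟩
  have h0 : (0 : ℝ) < γ := lt_trans one_pos hγ
  have hre : ∑ j ∈ Finset.Icc 1 (k + 2), γ ^ (k + 2 + t - j)
      = γ ^ t * ∑ i ∈ Finset.range (k + 2), γ ^ i := by
    rw [Finset.mul_sum]
    apply Finset.sum_nbij' (fun j => k + 2 - j) (fun i => k + 2 - i)
    · intro j hj; simp only [Finset.mem_Icc] at hj; simp; omega
    · intro i hi; simp only [Finset.mem_range] at hi; simp only [Finset.mem_Icc]; omega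
    · intro j hj; simp only [Finset.mem_Icc] at hj; omega
    · intro i hi; simp only [Finset.mem_range] at hi; omega
    · intro j hj; simp only [Finset.mem_Icc] at hj
      rw [← pow_add]
      congr 1
      omega
  rw [hre, show k + 2 + t = t + (k + 2) by ring, pow_add]
  apply mul_le_mul_of_nonneg_left _ (le_of_lt (pow_pos h0 t))
  have hk : (∑ i ∈ Finset.range (k + 2), γ ^ i) * (γ - 1) = γ ^ (k + 2) - 1 :=
    geom_sum_mul γ (k + 2)
  have hγ1 : 0 < γ - 1 := by linarith
  have h3 : γ ^ (k + 3) = γ * γ ^ (k + 2) := by ring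
  nlinarith [hk, hγ1, hroot]
end
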